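/- Let K be a field and R = K[X_1,…,X_n]. For a monomial u of R let I(u) denote the smallest strongly stable monomial ideal of R containing u. Then for every pair of monomials u_1, u_2 one has I(u_1)·I(u_2) = I(u_1·u_2). -/

import Mathlib

open MvPolynomial

/-- A monomial ideal `I` of `K[X_1,…,X_n]` is *strongly stable* if for every monomial
`m ∈ I`, every `j` with `X_j ∣ m` and every `i < j` one has `X_i · (m / X_j) ∈ I`. -/
def IsStronglyStable {n : ℕ} {K : Type*} [Field K]
    (I : Ideal (MvPolynomial (Fin n) K)) : Prop :=
  (∃ G : Set (Fin n →₀ ℕ), I = Ideal.span ((fun m => (monomial m (1 : K))) '' G)) ∧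
  ∀ m : Fin n →₀ ℕ, monomial m (1 : K) ∈ I →
    ∀ j : Fin n, 0 < m j → ∀ i : Fin n, i < j →
      monomial (m - Finsupp.single j 1 + Finsupp.single i 1) (1 : K) ∈ I

/-- `I(u)`, the smallest strongly stable monomial ideal containing the monomial `u`:
the intersection of all strongly stable monomial ideals containing `u`. -/
noncomputable def smallestStronglyStable {n : ℕ} (K : Type*) [Field K] (u : Fin n →₀ ℕ) :
    Ideal (MvPolynomial (Fin n) K) :=
  sInf {I | IsStronglyStable I ∧ monomial u (1 : K) ∈ I}


section Aux
open Finset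
variable {n : ℕ} {K : Type*} [Field K]

variable {n : ℕ}

def Sp (u : Fin n →₀ ℕ) (k : ℕ) : ℕ :=
  ∑ i ∈ Finset.univ.filter (fun i : Fin n => (i : ℕ) < k), u i

lemma Sp_zero (u : Fin n →₀ ℕ) : Sp u 0 = 0 := by
  simp [Sp]

lemma Sp_succ (u : Fin n →₀ ℕ) (k : ℕ) :
    Sp u (k + 1) = Sp u k + (if h : k < n then u ⟨k, h⟩ else 0) := by
  classical
  unfold Sp
  by_cases h : k < n
  · rw [dif_pos h]
    have : Finset.univ.filter (fun i : Fin n => (i : ℕ) < k + 1) =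
        insert ⟨k, h⟩ (Finset.univ.filter (fun i : Fin n => (i : ℕ) < k)) := by
      ext i
      simp only [Finset.mem_insert, Finset.mem_filter, Finset.mem_univ, true_and]
      constructor
      · intro hi
        rcases Nat.lt_succ_iff_lt_or_eq.mp hi with h' | h'
        · exact Or.inr h'
        · exact Or.inl (Fin.ext h')
      · rintro (rfl | hi)
        · exact Nat.lt_succ_self k
        · exact Nat.lt_succ_of_lt hi
    rw [this, Finset.sum_insert (by simp)]
    ring
  · rw [dif_neg h]
    have : ∀ l, n ≤ l → Finset.univ.filter (fun i : Fin n => (i : ℕ) < l) = Finset.univ := by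
      intro l hl
      ext i; simp only [Finset.mem_filter, Finset.mem_univ, true_and, iff_true]
      exact lt_of_lt_of_le i.isLt hl
    rw [this _ (by omega), this _ (by omega), add_zero]

lemma Sp_mono (u : Fin n →₀ ℕ) {k l : ℕ} (h : k ≤ l) : Sp u k ≤ Sp u l := by
  apply Finset.sum_le_sum_of_subset
  intro i hi
  simp only [Finset.mem_filter, Finset.mem_univ, true_and] at *
  omega

lemma Sp_stab (u : Fin n →₀ ℕ) {k : ℕ} (h : n ≤ k) : Sp u k = Sp u n := by
  unfold Sp
  congr 1
  ext i; simp only [Finset.mem_filter, Finset.mem_univ, true_and]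
  have := i.isLt; omega

lemma Sp_add (u v : Fin n →₀ ℕ) (k : ℕ) : Sp (u + v) k = Sp u k + Sp v k := by
  simp [Sp, Finsupp.add_apply, Finset.sum_add_distrib]

lemma Sp_le_Sp {u v : Fin n →₀ ℕ} (h : u ≤ v) (k : ℕ) : Sp u k ≤ Sp v k := by
  apply Finset.sum_le_sum
  intro i _
  exact Finsupp.le_def.mp h i

lemma Sp_single (j : Fin n) (c : ℕ) (k : ℕ) :
    Sp (Finsupp.single j c) k = if (j : ℕ) < k then c else 0 := by
  classical
  unfold Sp
  rw [Finset.sum_congr rfl (fun i _ => Finsupp.single_apply)]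
  rw [Finset.sum_ite_eq]
  simp

lemma Sp_le_deg (u : Fin n →₀ ℕ) (k : ℕ) : Sp u k ≤ Sp u n := by
  by_cases h : k ≤ n
  · exact Sp_mono u h
  · rw [Sp_stab u (by omega)]

lemma eq_of_Sp_eq {u v : Fin n →₀ ℕ} (h : ∀ k, Sp u k = Sp v k) : u = v := by
  ext j
  have h1 := Sp_succ u (j : ℕ)
  have h2 := Sp_succ v (j : ℕ)
  rw [dif_pos j.isLt] at h1 h2
  have hj : (⟨(j : ℕ), j.isLt⟩ : Fin n) = j := Fin.eta j j.isLt
  rw [hj] at h1 h2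
  have := h (j : ℕ); have := h ((j : ℕ) + 1)
  omega


variable {n : ℕ} {K : Type*} [Field K]

lemma exists_dvd_of_mem_span {G : Set (Fin n →₀ ℕ)} {p : MvPolynomial (Fin n) K}
    (hp : p ∈ Ideal.span ((fun m => (monomial m (1 : K))) '' G))
    {m : Fin n →₀ ℕ} (hm : coeff m p ≠ 0) : ∃ g ∈ G, g ≤ m := by
  classical
  let J : Ideal (MvPolynomial (Fin n) K) :=
  { carrier := {q | ∀ m : Fin n →₀ ℕ, coeff m q ≠ 0 → ∃ g ∈ G, g ≤ m}
    zero_mem' := by intro m hm; simp at hm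
    add_mem' := by
      intro a b ha hb m hm
      rw [coeff_add] at hm
      by_cases h : coeff m a ≠ 0
      · exact ha m h
      · push_neg at h
        exact hb m (by rw [h, zero_add] at hm; exact hm)
    smul_mem' := by
      intro r q hq m hm
      rw [smul_eq_mul, coeff_mul] at hm
      obtain ⟨x, hx, hne⟩ := Finset.exists_ne_zero_of_sum_ne_zero hm
      rw [Finset.HasAntidiagonal.mem_antidiagonal] at hx
      obtain ⟨g, hg, hle⟩ := hq x.2 (fun h => hne (by rw [h, mul_zero]))
      exact ⟨g, hg, hle.trans (by rw [← hx]; exact le_add_self)⟩ }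
  have hle : Ideal.span ((fun m => (monomial m (1 : K))) '' G) ≤ J := by
    rw [Ideal.span_le]
    rintro q ⟨g, hg, rfl⟩
    intro m hm
    rw [coeff_monomial] at hm
    split_ifs at hm with h
    · exact ⟨g, hg, le_of_eq h⟩
    · exact absurd rfl hm
  exact hle hp m hm

lemma move_Sp {u : Fin n →₀ ℕ} {j i : Fin n} (hj : 0 < u j) (k : ℕ) :
    Sp (u - Finsupp.single j 1 + Finsupp.single i 1) k +
      (if (j : ℕ) < k then 1 else 0) =
    Sp u k + (if (i : ℕ) < k then 1 else 0) := by
  have hle : Finsupp.single j 1 ≤ u := Finsupp.single_le_iff.mpr hj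
  have hu : (u - Finsupp.single j 1) + Finsupp.single j 1 = u :=
    tsub_add_cancel_of_le hle
  have e1 : Sp (u - Finsupp.single j 1 + Finsupp.single i 1) k
      = Sp (u - Finsupp.single j 1) k + (if (i : ℕ) < k then 1 else 0) := by
    rw [Sp_add, Sp_single]
  have e2 : Sp u k
      = Sp (u - Finsupp.single j 1) k + (if (j : ℕ) < k then 1 else 0) := by
    conv_lhs => rw [← hu]
    rw [Sp_add, Sp_single]
  rw [e1, e2]; ring

lemma descend (I : Ideal (MvPolynomial (Fin n) K))
    (hI : ∀ m : Fin n →₀ ℕ, monomial m (1 : K) ∈ I →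
      ∀ j : Fin n, 0 < m j → ∀ i : Fin n, i < j →
        monomial (m - Finsupp.single j 1 + Finsupp.single i 1) (1 : K) ∈ I)
    (m : Fin n →₀ ℕ) :
    ∀ (D : ℕ) (u : Fin n →₀ ℕ),
      (∑ k ∈ Finset.range (n + 1), (Sp m k - Sp u k)) = D →
      monomial u (1 : K) ∈ I → (∀ k, Sp u k ≤ Sp m k) → Sp u n = Sp m n →
      monomial m (1 : K) ∈ I := by
  intro D
  induction D using Nat.strong_induction_on with
  | _ D ih =>
  intro u hD hu hle hdeg
  by_cases hum : u = m
  · rwa [hum] at hu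
  -- find a strict inequality
  have hex : ∃ k, Sp u k < Sp m k := by
    by_contra hc
    push_neg at hc
    exact hum (eq_of_Sp_eq (fun k => le_antisymm (hle k) (hc k)))
  classical
  set k₀ := Nat.find hex with hk₀def
  have hk₀ : Sp u k₀ < Sp m k₀ := Nat.find_spec hex
  have hk₀min : ∀ l, l < k₀ → Sp u l = Sp m l := by
    intro l hl
    exact le_antisymm (hle l) (le_of_not_gt (Nat.find_min hex hl))
  have hk₀pos : 1 ≤ k₀ := by
    by_contra hc
    have h0 : k₀ = 0 := by omega
    rw [h0, Sp_zero, Sp_zero] at hk₀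
    omega
  have hk₀n : k₀ < n := by
    by_contra hc
    push_neg at hc
    rw [Sp_stab u hc, Sp_stab m hc, hdeg] at hk₀; omega
  -- find least j' ≥ k₀ with u j' > 0
  have hsne : (Finset.univ.filter (fun i : Fin n => k₀ ≤ (i : ℕ) ∧ 0 < u i)).Nonempty := by
    by_contra hc
    rw [Finset.not_nonempty_iff_eq_empty] at hc
    have hzero : ∀ i : Fin n, k₀ ≤ (i : ℕ) → u i = 0 := by
      intro i hi
      by_contra hiu
      have : i ∈ Finset.univ.filter (fun i : Fin n => k₀ ≤ (i : ℕ) ∧ 0 < u i) := by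
        simp only [Finset.mem_filter, Finset.mem_univ, true_and]
        exact ⟨hi, Nat.pos_of_ne_zero hiu⟩
      rw [hc] at this; exact absurd this (Finset.notMem_empty i)
    have hstab : ∀ t, k₀ ≤ t → Sp u t = Sp u k₀ := by
      intro t ht
      induction t, ht using Nat.le_induction with
      | base => rfl
      | succ t ht iht =>
        rw [Sp_succ]
        split_ifs with h
        · rw [hzero ⟨t, h⟩ (by simpa using ht), add_zero, iht]
        · rw [add_zero, iht]
    have h1 := hstab n (le_of_lt hk₀n)
    have h3 : Sp m k₀ ≤ Sp m n := Sp_mono m (le_of_lt hk₀n)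
    omega
  set s := Finset.univ.filter (fun i : Fin n => k₀ ≤ (i : ℕ) ∧ 0 < u i) with hsdef
  set j' := s.min' hsne with hj'def
  have hj'mem : j' ∈ s := Finset.min'_mem s hsne
  have hj'k₀ : k₀ ≤ (j' : ℕ) := by
    have := hj'mem; rw [hsdef, Finset.mem_filter] at this; exact this.2.1
  have hj'pos : 0 < u j' := by
    have := hj'mem; rw [hsdef, Finset.mem_filter] at this; exact this.2.2
  have hj'min : ∀ t, k₀ ≤ t → t < (j' : ℕ) → ∀ (h : t < n), u ⟨t, h⟩ = 0 := by
    intro t ht htj h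
    by_contra hc
    have hmem : (⟨t, h⟩ : Fin n) ∈ s := by
      rw [hsdef]
      simp only [Finset.mem_filter, Finset.mem_univ, true_and]
      exact ⟨by simpa using ht, Nat.pos_of_ne_zero hc⟩
    have := Finset.min'_le s _ hmem
    rw [← hj'def] at this
    have : (j' : ℕ) ≤ t := this
    omega
  set i₀ : Fin n := ⟨k₀ - 1, by omega⟩ with hi₀def
  have hi₀j' : i₀ < j' := by
    rw [Fin.lt_def]; simp only [hi₀def]; omega
  have hi₀val : (i₀ : ℕ) = k₀ - 1 := rfl
  set u' := u - Finsupp.single j' 1 + Finsupp.single i₀ 1 with hu'def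
  have hu' : monomial u' (1 : K) ∈ I := hI u hu j' hj'pos i₀ hi₀j'
  have hmove := fun k => move_Sp (i := i₀) hj'pos k
  have hij : (i₀ : ℕ) < (j' : ℕ) := hi₀j'
  -- Sp u ≤ Sp u'
  have hclaim1 : ∀ k, Sp u k ≤ Sp u' k := by
    intro k
    have h := hmove k
    rw [← hu'def] at h
    split_ifs at h <;> omega
  -- Sp u stays flat on [k₀, j']
  have hflat : ∀ t, k₀ ≤ t → t ≤ (j' : ℕ) → Sp u t = Sp u k₀ := by
    intro t ht htj
    induction t, ht using Nat.le_induction with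
    | base => rfl
    | succ t ht iht =>
      rw [Sp_succ]
      have h1 : t < n := by have := j'.isLt; omega
      rw [dif_pos h1, hj'min t ht (by omega) h1, add_zero, iht (by omega)]
  -- Sp u' ≤ Sp m
  have hclaim2 : ∀ k, Sp u' k ≤ Sp m k := by
    intro k
    have h := hmove k
    rw [← hu'def] at h
    by_cases hjk : (j' : ℕ) < k
    · rw [if_pos hjk, if_pos (by omega)] at h
      have := hle k; omega
    · rw [if_neg hjk] at h
      by_cases hik : (i₀ : ℕ) < k
      · rw [if_pos hik] at h
        have hkk₀ : k₀ ≤ k := by omega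
        have h2 : Sp u k = Sp u k₀ := hflat k hkk₀ (by omega)
        have h3 : Sp m k₀ ≤ Sp m k := Sp_mono m hkk₀
        omega
      · rw [if_neg hik] at h
        have := hle k; omega
  have hu'strict : Sp u' k₀ = Sp u k₀ + 1 := by
    have h := hmove k₀
    rw [← hu'def, if_neg (by omega), if_pos (by omega)] at h
    omega
  have hdeg' : Sp u' n = Sp m n := by
    have h := hmove n
    rw [← hu'def, if_pos j'.isLt, if_pos i₀.isLt] at h
    omega
  have hlt : (∑ k ∈ Finset.range (n + 1), (Sp m k - Sp u' k)) < D := by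
    rw [← hD]
    apply Finset.sum_lt_sum
    · intro k _
      have := hclaim1 k; omega
    · refine ⟨k₀, Finset.mem_range.mpr (by omega), ?_⟩
      have := hclaim2 k₀; omega
  exact ih _ hlt u' rfl hu' hclaim2 hdeg'

lemma exists_divisor {u b : Fin n →₀ ℕ} (h : ∀ k, Sp u k ≤ Sp b k) :
    ∃ m : Fin n →₀ ℕ, m ≤ b ∧ (∀ k, Sp u k ≤ Sp m k) ∧ Sp m n = Sp u n := by
  classical
  set d := Sp u n with hd
  set f : Fin n → ℕ := fun j => min (Sp b ((j : ℕ) + 1)) d - min (Sp b (j : ℕ)) d with hf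
  set m : Fin n →₀ ℕ := Finsupp.equivFunOnFinite.symm f with hm
  have hmapp : ∀ j : Fin n, m j = f j := by
    intro j; rw [hm]; rfl
  have hSb : ∀ (j : Fin n), Sp b ((j : ℕ) + 1) = Sp b (j : ℕ) + b j := by
    intro j
    rw [Sp_succ, dif_pos j.isLt, Fin.eta]
  have hkey : ∀ k, Sp m k = min (Sp b k) d := by
    intro k
    induction k with
    | zero => rw [Sp_zero, Sp_zero]; omega
    | succ k ihk =>
      rw [Sp_succ, ihk]
      by_cases hkn : k < n
      · rw [dif_pos hkn, hmapp, hf]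
        have h1 := hSb ⟨k, hkn⟩
        simp only [Fin.val_mk] at h1 ⊢
        have h2 : Sp b k ≤ Sp b (k + 1) := Sp_mono b (by omega)
        omega
      · rw [dif_neg hkn, add_zero, Sp_stab b (show n ≤ k by omega),
          Sp_stab b (show n ≤ k + 1 by omega)]
  refine ⟨m, ?_, ?_, ?_⟩
  · rw [Finsupp.le_def]
    intro j
    rw [hmapp]
    simp only [hf]
    have h1 := hSb j
    omega
  · intro k
    rw [hkey]
    have h1 := h k
    have h2 := Sp_le_deg u k
    omega
  · rw [hkey]
    have h1 := h n
    omega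

lemma mem_of_stable {I : Ideal (MvPolynomial (Fin n) K)}
    (hI : ∀ m : Fin n →₀ ℕ, monomial m (1 : K) ∈ I →
      ∀ j : Fin n, 0 < m j → ∀ i : Fin n, i < j →
        monomial (m - Finsupp.single j 1 + Finsupp.single i 1) (1 : K) ∈ I)
    {u b : Fin n →₀ ℕ} (hu : monomial u (1 : K) ∈ I) (h : ∀ k, Sp u k ≤ Sp b k) :
    monomial b (1 : K) ∈ I := by
  obtain ⟨m, hmb, hum, hdeg⟩ := exists_divisor h
  have hm : monomial m (1 : K) ∈ I :=
    descend I hI m _ u rfl hu hum hdeg.symm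
  have : monomial (b - m) (1 : K) * monomial m (1 : K) = monomial b (1 : K) := by
    rw [monomial_mul, one_mul, tsub_add_cancel_of_le hmb]
  rw [← this]
  exact Ideal.mul_mem_left I _ hm

lemma exists_split {u₁ u₂ b : Fin n →₀ ℕ}
    (h : ∀ k, Sp u₁ k + Sp u₂ k ≤ Sp b k) :
    ∃ b₁ b₂ : Fin n →₀ ℕ, b₁ + b₂ = b ∧ (∀ k, Sp u₁ k ≤ Sp b₁ k) ∧
      (∀ k, Sp u₂ k ≤ Sp b₂ k) := by
  classical
  set C : ℕ → ℕ := fun l => Sp b l - Sp u₂ l with hC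
  set B1 : ℕ → ℕ := fun k =>
    if h : k ≤ n then (Finset.Icc k n).inf' (Finset.nonempty_Icc.mpr h) C else C n with hB1
  have hB1le : ∀ k l, k ≤ l → l ≤ n → B1 k ≤ C l := by
    intro k l hkl hln
    rw [hB1]
    simp only [dif_pos (hkl.trans hln)]
    exact Finset.inf'_le C (Finset.mem_Icc.mpr ⟨hkl, hln⟩)
  have hB1lower : ∀ k, k ≤ n → Sp u₁ k ≤ B1 k := by
    intro k hk
    rw [hB1]
    simp only [dif_pos hk]
    apply Finset.le_inf'
    intro l hl
    rw [Finset.mem_Icc] at hl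
    have h1 : Sp u₁ k ≤ Sp u₁ l := Sp_mono u₁ hl.1
    have h2 := h l
    simp only [hC]
    omega
  have hB1rec : ∀ k, k < n → B1 k = min (C k) (B1 (k + 1)) := by
    intro k hk
    have hsucc : k + 1 ≤ n := hk
    simp only [hB1]
    rw [dif_pos (le_of_lt hk), dif_pos hsucc]
    apply le_antisymm
    · apply le_min
      · exact Finset.inf'_le C (Finset.mem_Icc.mpr ⟨le_rfl, le_of_lt hk⟩)
      · apply Finset.le_inf'
        intro l hl
        rw [Finset.mem_Icc] at hl
        exact Finset.inf'_le C (Finset.mem_Icc.mpr ⟨by omega, hl.2⟩)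
    · apply Finset.le_inf'
      intro l hl
      rw [Finset.mem_Icc] at hl
      rcases Nat.eq_or_lt_of_le hl.1 with rfl | hkl
      · exact min_le_left _ _
      · exact (min_le_right _ _).trans (Finset.inf'_le C (Finset.mem_Icc.mpr ⟨by omega, hl.2⟩))
  have hB1n : B1 n = C n := by
    rw [hB1]
    simp only [dif_pos (le_refl n)]
    apply le_antisymm
    · exact Finset.inf'_le C (Finset.mem_Icc.mpr ⟨le_rfl, le_rfl⟩)
    · apply Finset.le_inf'
      intro l hl
      rw [Finset.mem_Icc] at hl
      have : l = n := by omega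
      rw [this]
  have hmono : ∀ k, k < n → B1 k ≤ B1 (k + 1) := by
    intro k hk
    rw [hB1rec k hk]
    omega
  have hstep : ∀ k, ∀ hk : k < n, B1 (k + 1) ≤ B1 k + b ⟨k, hk⟩ := by
    intro k hk
    have h1 := hB1rec k hk
    have h2 : B1 (k + 1) ≤ C (k + 1) := by
      by_cases hkn : k + 1 ≤ n
      · exact hB1le (k + 1) (k + 1) le_rfl hkn
      · omega
    have h3 : Sp b (k + 1) = Sp b k + b ⟨k, hk⟩ := by
      rw [Sp_succ, dif_pos hk]
    have h4 : Sp u₂ (k + 1) = Sp u₂ k + u₂ ⟨k, hk⟩ := by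
      rw [Sp_succ, dif_pos hk]
    have h5 := h k
    simp only [hC] at h1 h2 ⊢
    omega
  set b₁ : Fin n →₀ ℕ :=
    Finsupp.equivFunOnFinite.symm (fun j => B1 ((j : ℕ) + 1) - B1 (j : ℕ)) with hb₁def
  have hb₁app : ∀ j : Fin n, b₁ j = B1 ((j : ℕ) + 1) - B1 (j : ℕ) := fun j => rfl
  have hb₁le : ∀ j : Fin n, b₁ j ≤ b j := by
    intro j
    rw [hb₁app]
    have h1 := hstep (j : ℕ) j.isLt
    rw [Fin.eta] at h1
    omega
  set b₂ : Fin n →₀ ℕ := Finsupp.equivFunOnFinite.symm (fun j => b j - b₁ j) with hb₂def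
  have hb₂app : ∀ j : Fin n, b₂ j = b j - b₁ j := fun j => rfl
  have hsum : b₁ + b₂ = b := by
    ext j
    rw [Finsupp.add_apply, hb₂app]
    have := hb₁le j
    omega
  have hB10 : B1 0 = 0 := by
    have h1 := hB1le 0 0 le_rfl (Nat.zero_le n)
    simp only [hC, Sp_zero] at h1
    omega
  have hSb₁ : ∀ k, k ≤ n → Sp b₁ k = B1 k := by
    intro k hk
    induction k with
    | zero => rw [Sp_zero, hB10]
    | succ k ihk =>
      have hkn : k < n := by omega
      rw [Sp_succ, dif_pos hkn, ihk (by omega), hb₁app]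
      have h1 := hmono k hkn
      simp only [Fin.val_mk]
      omega
  have hSsum : ∀ k, Sp b₁ k + Sp b₂ k = Sp b k := by
    intro k
    rw [← Sp_add, hsum]
  refine ⟨b₁, b₂, hsum, ?_, ?_⟩
  · intro k
    by_cases hk : k ≤ n
    · rw [hSb₁ k hk]
      exact hB1lower k hk
    · rw [Sp_stab u₁ (by omega), Sp_stab b₁ (by omega), hSb₁ n le_rfl]
      exact hB1lower n le_rfl
  · intro k
    by_cases hk : k ≤ n
    · have h1 := hSsum k
      have h2 := hB1le k k le_rfl hk
      rw [hSb₁ k hk] at h1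
      have h3 := h k
      simp only [hC] at h2
      omega
    · rw [Sp_stab u₂ (by omega), Sp_stab b₂ (by omega)]
      have h1 := hSsum n
      have h2 := hB1le n n le_rfl le_rfl
      rw [hSb₁ n le_rfl] at h1
      have h3 := h n
      simp only [hC] at h2
      omega

def borelSet (u : Fin n →₀ ℕ) : Set (Fin n →₀ ℕ) := {b | ∀ k, Sp u k ≤ Sp b k}

noncomputable def borelIdeal (K : Type*) [Field K] {n : ℕ} (u : Fin n →₀ ℕ) :
    Ideal (MvPolynomial (Fin n) K) :=
  Ideal.span ((fun m => (monomial m (1 : K))) '' borelSet u)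

lemma borel_stronglyStable (u : Fin n →₀ ℕ) :
    IsStronglyStable (borelIdeal K u) := by
  constructor
  · exact ⟨borelSet u, rfl⟩
  · intro m hm j hj i hij
    obtain ⟨g, hg, hgm⟩ := exists_dvd_of_mem_span hm
      (m := m) (by rw [coeff_monomial, if_pos rfl]; exact one_ne_zero)
    have hmB : ∀ k, Sp u k ≤ Sp m k := fun k => (hg k).trans (Sp_le_Sp hgm k)
    apply Ideal.subset_span
    refine ⟨m - Finsupp.single j 1 + Finsupp.single i 1, ?_, rfl⟩
    intro k
    have hmv := move_Sp (i := i) hj k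
    have hij' : (i : ℕ) < (j : ℕ) := hij
    have h1 := hmB k
    split_ifs at hmv <;> omega

lemma mem_borelIdeal_self (u : Fin n →₀ ℕ) : monomial u (1 : K) ∈ borelIdeal K u :=
  Ideal.subset_span ⟨u, fun _ => le_rfl, rfl⟩

lemma smallest_eq_borel (u : Fin n →₀ ℕ) :
    smallestStronglyStable K u = borelIdeal K u := by
  apply le_antisymm
  · exact sInf_le ⟨borel_stronglyStable u, mem_borelIdeal_self u⟩
  · apply le_sInf
    rintro I ⟨⟨-, hmove⟩, huI⟩
    rw [borelIdeal, Ideal.span_le]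
    rintro p ⟨b, hb, rfl⟩
    exact mem_of_stable hmove huI hb

lemma borel_mul (u₁ u₂ : Fin n →₀ ℕ) :
    borelIdeal K u₁ * borelIdeal K u₂ = borelIdeal K (u₁ + u₂) := by
  apply le_antisymm
  · rw [borelIdeal, borelIdeal, Ideal.span_mul_span', Ideal.span_le]
    rintro p hp
    rw [Set.mem_mul] at hp
    obtain ⟨p₁, hp₁, p₂, hp₂, rfl⟩ := hp
    obtain ⟨b₁, hb₁, rfl⟩ := hp₁
    obtain ⟨b₂, hb₂, rfl⟩ := hp₂
    apply Ideal.subset_span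
    refine ⟨b₁ + b₂, ?_, ?_⟩
    · intro k
      rw [Sp_add, Sp_add]
      exact add_le_add (hb₁ k) (hb₂ k)
    · rw [monomial_mul, one_mul]
  · rw [borelIdeal, Ideal.span_le]
    rintro p ⟨b, hb, rfl⟩
    have h : ∀ k, Sp u₁ k + Sp u₂ k ≤ Sp b k := by
      intro k
      have := hb k
      rwa [Sp_add] at this
    obtain ⟨b₁, b₂, hsum, h1, h2⟩ := exists_split h
    dsimp only
    have heq : (monomial b (1 : K)) = monomial b₁ 1 * monomial b₂ 1 := by
      rw [monomial_mul, one_mul, hsum]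
    rw [heq]
    exact Ideal.mul_mem_mul (Ideal.subset_span ⟨b₁, h1, rfl⟩)
      (Ideal.subset_span ⟨b₂, h2, rfl⟩)

end Aux

/-- For monomials `u₁, u₂` one has `I(u₁) · I(u₂) = I(u₁ · u₂)`. -/
theorem smallestStronglyStable_mul {n : ℕ} {K : Type*} [Field K] (u₁ u₂ : Fin n →₀ ℕ) :
    smallestStronglyStable K u₁ * smallestStronglyStable K u₂ =
      smallestStronglyStable K (u₁ + u₂) := by
  rw [smallest_eq_borel, smallest_eq_borel, smallest_eq_borel, borel_mul]
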